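/- Let W be a |T|×|A| real matrix with W Wᵀ = I, M a |A|×|A| real matrix, and Λ a |T|×|T| real matrix. Then ‖M − Wᵀ Λ W‖²_F = ‖Λ − W M Wᵀ‖²_F − ‖W M Wᵀ‖²_F + ‖M‖²_F. -/
import Mathlib
open Matrix

theorem stmt6 {T A : Type*} [Fintype T] [DecidableEq T] [Fintype A]
    (W : Matrix T A ℝ) (hW : W * Wᵀ = 1)
    (M : Matrix A A ℝ) (Λ : Matrix T T ℝ) :
    Matrix.trace ((M - Wᵀ * Λ * W) * (M - Wᵀ * Λ * W)ᵀ) =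
      Matrix.trace ((Λ - W * M * Wᵀ) * (Λ - W * M * Wᵀ)ᵀ)
        - Matrix.trace ((W * M * Wᵀ) * (W * M * Wᵀ)ᵀ)
        + Matrix.trace (M * Mᵀ) := by
  have h1 : ∀ (X : Matrix T A ℝ), W * (Wᵀ * X) = X := by
    intro X; rw [← Matrix.mul_assoc, hW, Matrix.one_mul]
  have h2 : ∀ (X : Matrix T T ℝ), W * (Wᵀ * X) = X := by
    intro X; rw [← Matrix.mul_assoc, hW, Matrix.one_mul]
  simp only [transpose_sub, transpose_mul, transpose_transpose, Matrix.sub_mul,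
    Matrix.mul_sub, trace_sub, Matrix.mul_assoc, h1, h2]
  have e1 : (Wᵀ * (Λ * (Λᵀ * W))).trace = (Λ * Λᵀ).trace := by
    rw [trace_mul_comm]
    simp [Matrix.mul_assoc, hW]
  have e2 : (Wᵀ * (Λ * (W * Mᵀ))).trace = (W * (M * (Wᵀ * Λᵀ))).trace := by
    rw [trace_mul_comm, ← trace_transpose (W * (M * (Wᵀ * Λᵀ)))]
    simp only [transpose_mul, transpose_transpose, Matrix.mul_assoc]
  have e3 : (M * (Wᵀ * (Λᵀ * W))).trace = (Λ * (W * (Mᵀ * Wᵀ))).trace := by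
    rw [← trace_transpose (Λ * (W * (Mᵀ * Wᵀ))), trace_mul_comm]
    simp only [transpose_mul, transpose_transpose, Matrix.mul_assoc]
    rw [← Matrix.mul_assoc Wᵀ, trace_mul_comm, Matrix.mul_assoc]
  rw [e1, e2, e3]; ring
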